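/- Decomposition and admissibility of the lapse-Wick-rotated scalar Lagrangian in the fiducial foliation (Eq. (3.4) and the damping property): let (N, n, ĝ) be real ADM data, θ ∈ ℝ, p ∈ ℝ^{d+1} and U ∈ ℝ. Then the complex matrices A_θ := A(−1, e^{−2iθ}N², n, ĝ), A₋ := A(−1, N², n, ĝ) and A₊ := A(+1, N², n, ĝ) are invertible, and −e^{−iθ}·(½ pᵀ A_θ⁻¹ p + U) = −cos θ·(½ pᵀ A₋⁻¹ p + U) + i sin θ·(½ pᵀ A₊⁻¹ p + U). Consequently, if θ ∈ (0, π) and U ≥ 0, the imaginary part of the lapse-Wick-rotated Lagrangian density equals sin θ·(½ pᵀ A₊⁻¹ p + U), which is nonnegative (and positive unless p = 0 and U = 0). -/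
import Mathlib


open Matrix Complex BigOperators

noncomputable section

/-- The ADM matrix `A(ε, λ, n, ĝ)` representing the line element
`ε λ dt² + ĝ_{ab}(dx^a + n^a dt)(dx^b + n^b dt)`. -/
def ADM {R : Type*} [CommRing R] {d : ℕ} (ε lam : R) (n : Fin d → R)
    (g : Matrix (Fin d) (Fin d) R) : Matrix (Fin (d+1)) (Fin (d+1)) R :=
  Matrix.of fun i j =>
    Fin.cases
      (Fin.cases (ε * lam + ∑ a, ∑ b, g a b * n a * n b)
        (fun a => ∑ b, g a b * n b) j)
      (fun a => Fin.cases (∑ b, g a b * n b) (fun b => g a b) j) i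

variable {d : ℕ}

/-- Block `τ = ∂t'/∂t` of a Jacobian. -/
def tauJ (J : Matrix (Fin (d+1)) (Fin (d+1)) ℝ) : ℝ := J 0 0

/-- Block `σ_c = ∂t'/∂x^c` of a Jacobian. -/
def sigJ (J : Matrix (Fin (d+1)) (Fin (d+1)) ℝ) : Fin d → ℝ := fun c => J 0 c.succ

/-- Block `ρ^a = ∂x'^a/∂t` of a Jacobian. -/
def rhoJ (J : Matrix (Fin (d+1)) (Fin (d+1)) ℝ) : Fin d → ℝ := fun a => J a.succ 0

/-- Block `X^a_c = ∂x'^a/∂x^c` of a Jacobian. -/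
def XJ (J : Matrix (Fin (d+1)) (Fin (d+1)) ℝ) : Matrix (Fin d) (Fin d) ℝ :=
  Matrix.of fun a c => J a.succ c.succ

/-- Block `k_a = (J⁻¹)₀ₐ` of the inverse Jacobian. -/
def kJ (J : Matrix (Fin (d+1)) (Fin (d+1)) ℝ) : Fin d → ℝ := fun a => J⁻¹ 0 a.succ

/-- Block `K^c_a = (J⁻¹)_{ca}` of the inverse Jacobian. -/
def KJ (J : Matrix (Fin (d+1)) (Fin (d+1)) ℝ) : Matrix (Fin d) (Fin d) ℝ :=
  Matrix.of fun c a => J⁻¹ c.succ a.succ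

/-- `C = τ - Σ_c σ_c n^c`. -/
def CJ (J : Matrix (Fin (d+1)) (Fin (d+1)) ℝ) (n : Fin d → ℝ) : ℝ :=
  tauJ J - ∑ c, sigJ J c * n c

/-- `σᵀ ĝ⁻¹ σ`. -/
def sgsJ (J : Matrix (Fin (d+1)) (Fin (d+1)) ℝ) (g : Matrix (Fin d) (Fin d) ℝ) : ℝ :=
  ∑ c, ∑ e, sigJ J c * g⁻¹ c e * sigJ J e

/-- `(X ĝ⁻¹ σ)^a`. -/
def Xgs (J : Matrix (Fin (d+1)) (Fin (d+1)) ℝ) (g : Matrix (Fin d) (Fin d) ℝ) :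
    Fin d → ℝ := fun a => ∑ c, ∑ e, XJ J a c * g⁻¹ c e * sigJ J e

/-- `(ρ - X n)^a`. -/
def rXn (J : Matrix (Fin (d+1)) (Fin (d+1)) ℝ) (n : Fin d → ℝ) : Fin d → ℝ :=
  fun a => rhoJ J a - ∑ c, XJ J a c * n c

/-- `D_ε² = C² + ε N² σᵀĝ⁻¹σ`. -/
def Deps2 (J : Matrix (Fin (d+1)) (Fin (d+1)) ℝ) (ε N : ℝ) (n : Fin d → ℝ)
    (g : Matrix (Fin d) (Fin d) ℝ) : ℝ :=
  (CJ J n)^2 + ε * N^2 * sgsJ J g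

/-- transf_ε primed squared lapse `N'² = N²/D_ε²`. -/
def NP2 (J : Matrix (Fin (d+1)) (Fin (d+1)) ℝ) (ε N : ℝ) (n : Fin d → ℝ)
    (g : Matrix (Fin d) (Fin d) ℝ) : ℝ := N^2 / Deps2 J ε N n g

/-- transf_ε primed shift `n'^a`. -/
def shiftP (J : Matrix (Fin (d+1)) (Fin (d+1)) ℝ) (ε N : ℝ) (n : Fin d → ℝ)
    (g : Matrix (Fin d) (Fin d) ℝ) : Fin d → ℝ := fun a =>
  -((rXn J n a) * CJ J n + ε * N^2 * Xgs J g a) / Deps2 J ε N n g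

/-- transf_ε primed spatial metric `ĝ'_{ab}`. -/
def ghP (J : Matrix (Fin (d+1)) (Fin (d+1)) ℝ) (ε N : ℝ) (n : Fin d → ℝ)
    (g : Matrix (Fin d) (Fin d) ℝ) : Matrix (Fin d) (Fin d) ℝ :=
  Matrix.of fun a b =>
    (∑ c, ∑ e, (KJ J c a + kJ J a * n c) * (KJ J e b + kJ J b * n e) * g c e)
    + ε * N^2 * kJ J a * kJ J b

/-- The Wick phase `e^{-2iθ}`. -/
def wick (θ : ℝ) : ℂ := Complex.exp (-2 * Complex.I * θ)

/-- `D_θ² = C² - e^{-2iθ} N² σᵀĝ⁻¹σ`. -/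
def Dth2 (J : Matrix (Fin (d+1)) (Fin (d+1)) ℝ) (θ N : ℝ) (n : Fin d → ℝ)
    (g : Matrix (Fin d) (Fin d) ℝ) : ℂ :=
  (CJ J n : ℂ)^2 - wick θ * (N:ℂ)^2 * (sgsJ J g : ℂ)

/-- lapse-Wick-rotated primed squared lapse `λ'_θ = e^{-2iθ}N²/D_θ²`. -/
def lamW (J : Matrix (Fin (d+1)) (Fin (d+1)) ℝ) (θ N : ℝ) (n : Fin d → ℝ)
    (g : Matrix (Fin d) (Fin d) ℝ) : ℂ :=
  wick θ * (N:ℂ)^2 / Dth2 J θ N n g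

/-- lapse-Wick-rotated primed shift `n'_θ{}^a`. -/
def shiftW (J : Matrix (Fin (d+1)) (Fin (d+1)) ℝ) (θ N : ℝ) (n : Fin d → ℝ)
    (g : Matrix (Fin d) (Fin d) ℝ) : Fin d → ℂ := fun a =>
  -((rXn J n a : ℂ) * (CJ J n : ℂ) - wick θ * (N:ℂ)^2 * (Xgs J g a : ℂ)) / Dth2 J θ N n g

/-- lapse-Wick-rotated primed spatial metric `(ĝ'^θ)_{ab}`. -/
def ghW (J : Matrix (Fin (d+1)) (Fin (d+1)) ℝ) (θ N : ℝ) (n : Fin d → ℝ)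
    (g : Matrix (Fin d) (Fin d) ℝ) : Matrix (Fin d) (Fin d) ℂ :=
  Matrix.of fun a b =>
    ((∑ c, ∑ e, (KJ J c a + kJ J a * n c) * (KJ J e b + kJ J b * n e) * g c e : ℝ) : ℂ)
    - wick θ * (N:ℂ)^2 * (kJ J a : ℂ) * (kJ J b : ℂ)

section ADMaux
variable {K : Type*} [Field K]

def ADMinv (ε lam : K) (n : Fin d → K) (g : Matrix (Fin d) (Fin d) K) :
    Matrix (Fin (d+1)) (Fin (d+1)) K :=
  Matrix.of fun i j =>
    Fin.cases
      (Fin.cases ((ε * lam)⁻¹) (fun b => -(ε * lam)⁻¹ * n b) j)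
      (fun a => Fin.cases (-(ε * lam)⁻¹ * n a)
        (fun b => g⁻¹ a b + (ε * lam)⁻¹ * n a * n b) j) i

lemma ADM_mul_inv (ε lam : K) (h : ε * lam ≠ 0) (n : Fin d → K)
    (g : Matrix (Fin d) (Fin d) K) (hg : IsUnit g.det) (hgs : g.IsSymm) :
    ADM ε lam n g * ADMinv ε lam n g = 1 := by
  have hgi : g * g⁻¹ = 1 := Matrix.mul_nonsing_inv g hg
  have hsym : ∀ a b, g a b = g b a := fun a b => by
    conv_lhs => rw [← hgs, Matrix.transpose_apply]
  set μ := (ε * lam)⁻¹ with hμ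
  have hμh : (ε * lam) * μ = 1 := mul_inv_cancel₀ h
  have hGG : ∀ a b, (∑ c, g a c * g⁻¹ c b) = if a = b then 1 else 0 := by
    intro a b
    have := congrFun (congrFun hgi a) b
    simpa [Matrix.mul_apply, Matrix.one_apply] using this
  ext i j
  refine Fin.cases ?_ (fun a => ?_) i <;> refine Fin.cases ?_ (fun b => ?_) j <;>
    simp only [Matrix.mul_apply, ADM, ADMinv, Matrix.of_apply, Fin.sum_univ_succ,
      Fin.cases_zero, Fin.cases_succ, Matrix.one_apply]
  · -- (0,0)
    have e1 : ∀ a : Fin d, (∑ b, g a b * n b) * (-μ * n a)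
        = -(μ * ∑ b, g a b * n a * n b) := by
      intro a
      rw [Finset.sum_mul, Finset.mul_sum, ← Finset.sum_neg_distrib]
      exact Finset.sum_congr rfl fun b _ => by ring
    rw [Finset.sum_congr rfl (fun a _ => e1 a), Finset.sum_neg_distrib,
      ← Finset.mul_sum]
    rw [if_pos trivial, add_mul, hμh]
    ring
  · -- (0, b.succ)
    have e1 : ∀ a : Fin d, (∑ c, g a c * n c) * (g⁻¹ a b + μ * n a * n b)
        = (∑ c, n c * (g c a * g⁻¹ a b)) + μ * n b * (∑ c, g a c * n a * n c) := by
      intro a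
      rw [mul_add]
      congr 1
      · rw [Finset.sum_mul]
        exact Finset.sum_congr rfl fun c _ => by rw [hsym a c]; ring
      · rw [Finset.sum_mul, Finset.mul_sum]
        exact Finset.sum_congr rfl fun c _ => by ring
    rw [Finset.sum_congr rfl (fun a _ => e1 a), Finset.sum_add_distrib,
      Finset.sum_comm (f := fun a c => n c * (g c a * g⁻¹ a b)), ← Finset.mul_sum]
    have e2 : (∑ c, ∑ a, n c * (g c a * g⁻¹ a b)) = n b := by
      rw [Finset.sum_congr rfl (fun c _ => by rw [← Finset.mul_sum, hGG c b])]
      simp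
    rw [e2, if_neg (by simp [(Fin.succ_ne_zero b).symm, eq_comm])]
    linear_combination (-(n b)) * hμh
  · -- (a.succ, 0)
    have e1 : ∀ b : Fin d, g a b * (-μ * n b) = -(μ * (g a b * n b)) := fun b => by ring
    rw [Finset.sum_congr rfl (fun b _ => e1 b), Finset.sum_neg_distrib, ← Finset.mul_sum,
      if_neg (Fin.succ_ne_zero a)]
    ring
  · -- (a.succ, b.succ)
    have e1 : ∀ c : Fin d, g a c * (g⁻¹ c b + μ * n c * n b)
        = g a c * g⁻¹ c b + μ * n b * (g a c * n c) := fun c => by ring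
    rw [Finset.sum_congr rfl (fun c _ => e1 c), Finset.sum_add_distrib, hGG a b,
      ← Finset.mul_sum]
    simp only [Fin.succ_inj]
    ring

lemma ADM_quad (ε lam : K) (h : ε * lam ≠ 0) (n : Fin d → K)
    (g : Matrix (Fin d) (Fin d) K) (hg : IsUnit g.det) (hgs : g.IsSymm)
    (p : Fin (d+1) → K) :
    p ⬝ᵥ (ADM ε lam n g)⁻¹.mulVec p
      = (ε * lam)⁻¹ * (p 0 - ∑ a, n a * p a.succ)^2
        + ∑ a, ∑ b, p a.succ * g⁻¹ a b * p b.succ := by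
  rw [Matrix.inv_eq_right_inv (ADM_mul_inv ε lam h n g hg hgs)]
  set μ := (ε * lam)⁻¹ with hμ
  set S := ∑ a, n a * p a.succ with hS
  set Q := ∑ a, ∑ b, p a.succ * g⁻¹ a b * p b.succ with hQ
  simp only [dotProduct, Matrix.mulVec, ADMinv, Matrix.of_apply,
    Fin.sum_univ_succ, Fin.cases_zero, Fin.cases_succ]
  have h1 : (∑ x : Fin d, -μ * n x * p x.succ) = S * (-μ) := by
    rw [hS, Finset.sum_mul]
    exact Finset.sum_congr rfl fun a _ => by ring
  have h2 : (∑ x : Fin d, p x.succ *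
        (-μ * n x * p 0 + ∑ x_1 : Fin d, (g⁻¹ x x_1 + μ * n x * n x_1) * p x_1.succ))
      = S * (-(μ * p 0)) + Q + S * (μ * S) := by
    have e : ∀ x : Fin d, p x.succ *
          (-μ * n x * p 0 + ∑ x_1 : Fin d, (g⁻¹ x x_1 + μ * n x * n x_1) * p x_1.succ)
        = (n x * p x.succ) * (-(μ * p 0)) + (∑ b, p x.succ * g⁻¹ x b * p b.succ)
          + (n x * p x.succ) * (μ * S) := by
      intro x
      have e3 : p x.succ * (∑ x_1 : Fin d, (g⁻¹ x x_1 + μ * n x * n x_1) * p x_1.succ)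
          = (∑ b, p x.succ * g⁻¹ x b * p b.succ) + (n x * p x.succ) * (μ * S) :=
        calc p x.succ * (∑ x_1 : Fin d, (g⁻¹ x x_1 + μ * n x * n x_1) * p x_1.succ)
            = ∑ b, (p x.succ * g⁻¹ x b * p b.succ
                + (μ * n x * p x.succ) * (n b * p b.succ)) := by
              rw [Finset.mul_sum]
              exact Finset.sum_congr rfl fun b _ => by ring
          _ = (∑ b, p x.succ * g⁻¹ x b * p b.succ)
              + ∑ b, (μ * n x * p x.succ) * (n b * p b.succ) := Finset.sum_add_distrib
          _ = (∑ b, p x.succ * g⁻¹ x b * p b.succ) + (n x * p x.succ) * (μ * S) := by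
              rw [← Finset.mul_sum, ← hS]; ring
      rw [mul_add, e3]
      ring
    rw [Finset.sum_congr rfl (fun x _ => e x), Finset.sum_add_distrib,
      Finset.sum_add_distrib, ← Finset.sum_mul, ← Finset.sum_mul, ← hS, ← hQ]
  rw [h1, h2]
  ring

end ADMaux

/-- Eq. (3.4) and the damping property: decomposition and admissibility of the
lapse-Wick-rotated scalar Lagrangian in the fiducial foliation. -/
theorem lapse_wick_fiducial_admissibility (d : ℕ) (hd : 1 ≤ d) (θ : ℝ)
    (N : ℝ) (hN : 0 < N) (n : Fin d → ℝ)
    (g : Matrix (Fin d) (Fin d) ℝ) (hgs : g.IsSymm) (hg : g.PosDef)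
    (p : Fin (d+1) → ℝ) (U : ℝ) :
    let nc : Fin d → ℂ := fun a => (n a : ℂ)
    let gc : Matrix (Fin d) (Fin d) ℂ := g.map Complex.ofReal
    let Aθ : Matrix (Fin (d+1)) (Fin (d+1)) ℂ := ADM (-1 : ℂ) (wick θ * (N:ℂ)^2) nc gc
    let Am : Matrix (Fin (d+1)) (Fin (d+1)) ℂ := ADM (-1 : ℂ) ((N:ℂ)^2) nc gc
    let Ap : Matrix (Fin (d+1)) (Fin (d+1)) ℂ := ADM (1 : ℂ) ((N:ℂ)^2) nc gc
    let pc : Fin (d+1) → ℂ := fun μ => (p μ : ℂ)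
    let Lθ : ℂ := -Complex.exp (-Complex.I * θ) *
      ((1/2 : ℂ) * (pc ⬝ᵥ Aθ⁻¹.mulVec pc) + (U : ℂ))
    let Qp : ℝ := (1/2) * (p ⬝ᵥ (ADM (1:ℝ) (N^2) n g)⁻¹.mulVec p) + U
    IsUnit Aθ.det ∧ IsUnit Am.det ∧ IsUnit Ap.det ∧
    (Lθ = -(Real.cos θ : ℂ) * ((1/2 : ℂ) * (pc ⬝ᵥ Am⁻¹.mulVec pc) + (U : ℂ))
      + Complex.I * (Real.sin θ : ℂ) * ((1/2 : ℂ) * (pc ⬝ᵥ Ap⁻¹.mulVec pc) + (U : ℂ))) ∧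
    (θ ∈ Set.Ioo 0 Real.pi → 0 ≤ U →
      Lθ.im = Real.sin θ * Qp ∧ 0 ≤ Real.sin θ * Qp ∧
      (¬(p = 0 ∧ U = 0) → 0 < Real.sin θ * Qp)) := by
  intro nc gc Aθ Am Ap pc Lθ Qp
  -- basic nonvanishing facts
  have hNc : (N:ℂ) ≠ 0 := Complex.ofReal_ne_zero.mpr hN.ne'
  have hN2 : (N:ℂ)^2 ≠ 0 := pow_ne_zero 2 hNc
  have hw0 : wick θ ≠ 0 := Complex.exp_ne_zero _
  have hθ1 : ((-1 : ℂ)) * (wick θ * (N:ℂ)^2) ≠ 0 := by simp [hw0, hN2]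
  have hθ2 : ((-1 : ℂ)) * ((N:ℂ)^2) ≠ 0 := by simp [hN2]
  have hθ3 : ((1 : ℂ)) * ((N:ℂ)^2) ≠ 0 := by simp [hN2]
  have hθ4 : (1 : ℝ) * (N^2) ≠ 0 := by positivity
  -- determinant facts for g and gc
  have hgdet : IsUnit g.det := isUnit_iff_ne_zero.mpr hg.det_pos.ne'
  have hsymm : ∀ a b, g a b = g b a := fun a b => by
    conv_lhs => rw [← hgs, Matrix.transpose_apply]
  have hgcs : gc.IsSymm := by
    ext a b
    simp only [Matrix.transpose_apply, Matrix.map_apply, gc]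
    exact congrArg _ (hsymm b a)
  have hgcmul : gc * (g⁻¹.map Complex.ofReal) = 1 := by
    ext a b
    have h1 := congrFun (congrFun (Matrix.mul_nonsing_inv g hgdet) a) b
    simp only [Matrix.mul_apply, Matrix.one_apply] at h1 ⊢
    simp only [Matrix.map_apply, gc]
    have hcast : (∑ x, ((g a x : ℝ) : ℂ) * ((g⁻¹ x b : ℝ) : ℂ))
        = ((∑ x, g a x * g⁻¹ x b : ℝ) : ℂ) := by push_cast; rfl
    rw [hcast, h1]
    by_cases hab : a = b <;> simp [hab]
  have hgcdet : IsUnit gc.det := Matrix.isUnit_det_of_right_inverse hgcmul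
  have hgcinv : gc⁻¹ = g⁻¹.map Complex.ofReal := Matrix.inv_eq_right_inv hgcmul
  -- real scalar data
  set w : ℝ := p 0 - ∑ a, n a * p a.succ with hw
  set q : ℝ := ∑ a, ∑ b, p a.succ * g⁻¹ a b * p b.succ with hq
  set ph : Fin d → ℝ := fun a => p a.succ with hph
  -- cast facts
  have hcast1 : (pc 0 - ∑ a, nc a * pc a.succ) = ((w : ℝ) : ℂ) := by
    simp only [pc, nc, hw]
    push_cast
    ring
  have hcast2 : (∑ a, ∑ b, pc a.succ * gc⁻¹ a b * pc b.succ) = ((q : ℝ) : ℂ) := by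
    rw [hgcinv]
    simp only [pc, hq, Matrix.map_apply]
    push_cast
    rfl
  -- the three complex quadratic forms
  have hQθ : pc ⬝ᵥ Aθ⁻¹.mulVec pc
      = ((-1 : ℂ) * (wick θ * (N:ℂ)^2))⁻¹ * (w:ℂ)^2 + (q:ℂ) := by
    rw [ADM_quad _ _ hθ1 nc gc hgcdet hgcs pc, hcast1, hcast2]
  have hQm : pc ⬝ᵥ Am⁻¹.mulVec pc
      = ((-1 : ℂ) * ((N:ℂ)^2))⁻¹ * (w:ℂ)^2 + (q:ℂ) := by
    rw [ADM_quad _ _ hθ2 nc gc hgcdet hgcs pc, hcast1, hcast2]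
  have hQp' : pc ⬝ᵥ Ap⁻¹.mulVec pc
      = ((1 : ℂ) * ((N:ℂ)^2))⁻¹ * (w:ℂ)^2 + (q:ℂ) := by
    rw [ADM_quad _ _ hθ3 nc gc hgcdet hgcs pc, hcast1, hcast2]
  have hQpR : p ⬝ᵥ (ADM (1:ℝ) (N^2) n g)⁻¹.mulVec p
      = ((1:ℝ) * N^2)⁻¹ * w^2 + q := by
    rw [ADM_quad _ _ hθ4 n g hgdet hgs p]
  -- exponential identities
  have hE : Complex.exp (-Complex.I * θ)
      = (Real.cos θ : ℂ) - Complex.I * (Real.sin θ : ℂ) := by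
    have h2 : -Complex.I * θ = ((-θ : ℝ) : ℂ) * Complex.I := by push_cast; ring
    rw [h2, Complex.exp_mul_I, ← Complex.ofReal_cos, ← Complex.ofReal_sin,
      Real.cos_neg, Real.sin_neg]
    push_cast
    ring
  have hEW : Complex.exp (-Complex.I * θ) * (wick θ)⁻¹
      = (Real.cos θ : ℂ) + Complex.I * (Real.sin θ : ℂ) := by
    rw [wick, ← Complex.exp_neg, ← Complex.exp_add]
    have h2 : -Complex.I * θ + -(-2 * Complex.I * θ) = ((θ : ℝ) : ℂ) * Complex.I := by
      push_cast; ring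
    rw [h2, Complex.exp_mul_I, ← Complex.ofReal_cos, ← Complex.ofReal_sin]
    ring
  -- inverse simplifications
  have hi1 : ((-1 : ℂ) * (wick θ * (N:ℂ)^2))⁻¹ = -((wick θ)⁻¹ * ((N:ℂ)^2)⁻¹) := by
    rw [neg_one_mul, inv_neg, mul_inv]
  have hi2 : ((-1 : ℂ) * ((N:ℂ)^2))⁻¹ = -(((N:ℂ)^2)⁻¹) := by
    rw [neg_one_mul, inv_neg]
  -- Eq. (3.4)
  have hdec : Lθ = -(Real.cos θ : ℂ) * ((1/2 : ℂ) * (pc ⬝ᵥ Am⁻¹.mulVec pc) + (U : ℂ))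
      + Complex.I * (Real.sin θ : ℂ) * ((1/2 : ℂ) * (pc ⬝ᵥ Ap⁻¹.mulVec pc) + (U : ℂ)) := by
    show -Complex.exp (-Complex.I * θ) * ((1/2 : ℂ) * (pc ⬝ᵥ Aθ⁻¹.mulVec pc) + (U : ℂ)) = _
    rw [hQθ, hQm, hQp', hi1, hi2, one_mul]
    linear_combination ((1/2 : ℂ) * ((N:ℂ)^2)⁻¹ * (w:ℂ)^2) * hEW
      + (-(1/2 : ℂ) * (q:ℂ) - (U:ℂ)) * hE
  refine ⟨Matrix.isUnit_det_of_right_inverse (ADM_mul_inv _ _ hθ1 nc gc hgcdet hgcs),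
    Matrix.isUnit_det_of_right_inverse (ADM_mul_inv _ _ hθ2 nc gc hgcdet hgcs),
    Matrix.isUnit_det_of_right_inverse (ADM_mul_inv _ _ hθ3 nc gc hgcdet hgcs),
    hdec, ?_⟩
  -- admissibility
  intro hθ hU
  have hQpval : Qp = (1/2) * (((1:ℝ) * N^2)⁻¹ * w^2 + q) + U := by
    show (1/2) * (p ⬝ᵥ (ADM (1:ℝ) (N^2) n g)⁻¹.mulVec p) + U = _
    rw [hQpR]
  have hLθim : Lθ.im = Real.sin θ * Qp := by
    have hX : (1/2 : ℂ) * (pc ⬝ᵥ Am⁻¹.mulVec pc) + (U : ℂ)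
        = (((1/2) * (-((N^2)⁻¹) * w^2 + q) + U : ℝ) : ℂ) := by
      rw [hQm, hi2]
      push_cast
      ring
    have hY : (1/2 : ℂ) * (pc ⬝ᵥ Ap⁻¹.mulVec pc) + (U : ℂ) = ((Qp : ℝ) : ℂ) := by
      rw [hQp', hQpval, one_mul]
      push_cast
      ring
    have hform : Lθ = ((-(Real.cos θ * ((1/2) * (-((N^2)⁻¹) * w^2 + q) + U)) : ℝ) : ℂ)
        + ((Real.sin θ * Qp : ℝ) : ℂ) * Complex.I := by
      rw [hdec, hX, hY]
      push_cast
      ring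
    rw [hform, Complex.add_im, Complex.ofReal_im, Complex.mul_im,
      Complex.I_im, Complex.I_re, Complex.ofReal_re]
    ring
  have hsin : 0 < Real.sin θ := Real.sin_pos_of_pos_of_lt_pi hθ.1 hθ.2
  have hqnn : 0 ≤ q := by
    have hq2 : q = ph ⬝ᵥ g⁻¹.mulVec ph := by
      simp only [hq, dotProduct, Matrix.mulVec, Finset.mul_sum, hph]
      exact Finset.sum_congr rfl fun a _ => Finset.sum_congr rfl fun b _ => by ring
    have h3 := hg.inv.posSemidef.re_dotProduct_nonneg ph
    rw [hq2]
    simpa using h3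
  have hw2nn : 0 ≤ ((1:ℝ) * N^2)⁻¹ * w^2 := by positivity
  have hQpnn : 0 ≤ Qp := by rw [hQpval]; linarith
  refine ⟨hLθim, mul_nonneg hsin.le hQpnn, ?_⟩
  intro hnot
  have hQppos : 0 < Qp := by
    rcases hU.lt_or_eq with hU' | hU'
    · rw [hQpval]; linarith
    · -- U = 0, so p ≠ 0
      have hp : p ≠ 0 := fun hp0 => hnot ⟨hp0, hU'.symm⟩
      by_cases hph0 : ph = 0
      · -- p 0 ≠ 0 and w = p 0
        have hp0 : p 0 ≠ 0 := by
          intro h0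
          apply hp
          funext i
          refine Fin.cases ?_ (fun a => ?_) i
          · exact h0
          · exact congrFun hph0 a
        have hwval : w = p 0 := by
          rw [hw]
          have : ∀ a : Fin d, n a * p a.succ = 0 := fun a => by
            have := congrFun hph0 a
            simp only [hph, Pi.zero_apply] at this
            rw [this, mul_zero]
          rw [Finset.sum_congr rfl fun a _ => this a]
          simp
        have : 0 < ((1:ℝ) * N^2)⁻¹ * w^2 := by
          rw [hwval]
          positivity
        rw [hQpval]; linarith
      · -- q > 0
        have hq2 : q = ph ⬝ᵥ g⁻¹.mulVec ph := by
          simp only [hq, dotProduct, Matrix.mulVec, Finset.mul_sum, hph]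
          exact Finset.sum_congr rfl fun a _ => Finset.sum_congr rfl fun b _ => by ring
        have h3 := hg.inv.re_dotProduct_pos hph0
        have hqpos : 0 < q := by rw [hq2]; simpa using h3
        rw [hQpval]; linarith
  exact mul_pos hsin hQppos
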